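/- Let G be an abelian group and (F, Ω) an abelian 3-cocycle on G with values in ℂ×, i.e. F : G³ → ℂ× and Ω : G² → ℂ× satisfy the 3-cocycle identity F(g+h,k,l)F(g,h,k+l) = F(g,h,k)F(g,h+k,l)F(h,k,l) and the two hexagon identities F(h,k,g)⁻¹ Ω(g,h+k) F(g,h,k)⁻¹ = Ω(g,k) F(h,g,k)⁻¹ Ω(g,h) and F(k,g,h) Ω(g+h,k) F(g,h,k) = Ω(g,k) F(g,k,h) Ω(h,k). Then the trace q(g) = Ω(g,g) is a quadratic form on G: q(-g) = q(g), and the symmetric function b(g,h) = q(g+h) q(g)⁻¹ q(h)⁻¹ is biadditive in each variable. -/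

import Mathlib

/-- Let `G` be an abelian group and `(F, Ω)` an abelian 3-cocycle on
`G` with values in `ℂˣ` (normalised `F` satisfying the 3-cocycle identity and the two
hexagon identities). Then the trace `q(g) = Ω(g,g)` is a quadratic form on `G`:
`q(-g) = q(g)`, and `b(g,h) = q(g+h) q(g)⁻¹ q(h)⁻¹` is biadditive in each variable. -/
theorem stmt8 {G : Type*} [AddCommGroup G]
    (F : G → G → G → ℂˣ) (Ω : G → G → ℂˣ)
    (hFnorm : ∀ g h : G, F 0 g h = 1 ∧ F g 0 h = 1 ∧ F g h 0 = 1)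
    (hF : ∀ g h k l : G,
      F (g + h) k l * F g h (k + l) = F g h k * F g (h + k) l * F h k l)
    (hhex1 : ∀ g h k : G,
      (F h k g)⁻¹ * Ω g (h + k) * (F g h k)⁻¹ = Ω g k * (F h g k)⁻¹ * Ω g h)
    (hhex2 : ∀ g h k : G,
      F k g h * Ω (g + h) k * F g h k = Ω g k * F g k h * Ω h k) :
    let q : G → ℂˣ := fun g => Ω g g
    let b : G → G → ℂˣ := fun g h => q (g + h) * (q g)⁻¹ * (q h)⁻¹
    (∀ g, q (-g) = q g) ∧
    (∀ g₁ g₂ h, b (g₁ + g₂) h = b g₁ h * b g₂ h) ∧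
    (∀ g h₁ h₂, b g (h₁ + h₂) = b g h₁ * b g h₂) := by
  -- Solved forms of the two hexagon identities, in ℂ.
  have e1 : ∀ g h k : G, (Ω g (h+k) : ℂ) = F h k g * F g h k * Ω g k * Ω g h / F h g k := by
    intro g h k
    have e := congrArg Units.val (hhex1 g h k)
    push_cast at e
    field_simp at e ⊢
    linear_combination e
  have e2 : ∀ g h k : G, (Ω (g+h) k : ℂ) = Ω g k * F g k h * Ω h k / (F k g h * F g h k) := by
    intro g h k
    have e := congrArg Units.val (hhex2 g h k)
    push_cast at e
    field_simp at e ⊢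
    linear_combination e
  -- Normalisation of Ω.
  have hΩr : ∀ g : G, (Ω g 0 : ℂ) = 1 := by
    intro g
    have e := congrArg Units.val (hhex1 g 0 0)
    simp [(hFnorm 0 g).1, (hFnorm g 0).2.1, (hFnorm 0 0).2.2, (hFnorm 0 g).2.2] at e
    simp [e]
  have hΩl : ∀ k : G, (Ω 0 k : ℂ) = 1 := by
    intro k
    have e := congrArg Units.val (hhex2 0 0 k)
    simp [(hFnorm 0 0).1, (hFnorm 0 k).1, (hFnorm k 0).2.1, (hFnorm 0 k).2.2] at e
    simp [e]
  -- The key identity: q(g+h) = Ω(g,h) Ω(h,g) q(g) q(h).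
  have hkey : ∀ g h : G, (Ω (g+h) (g+h) : ℂ) = Ω g h * Ω h g * Ω g g * Ω h h := by
    intro g h
    have a := e2 g h (g+h)
    have b1 := e1 g g h
    have b2 := e1 h g h
    have c := congrArg Units.val (hF g h g h)
    rw [add_comm h g] at c
    push_cast at c
    rw [b1, b2] at a
    rw [a]
    field_simp
    linear_combination (-1 : ℂ) * c
  -- Biadditivity of B(g,h) = Ω(g,h) Ω(h,g).
  have hBadd : ∀ a b c : G,
      (Ω (a+b) c * Ω c (a+b) : ℂ) = (Ω a c * Ω c a) * (Ω b c * Ω c b) := by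
    intro a b c
    have u := e2 a b c
    have v := e1 c a b
    rw [u, v]
    field_simp
  -- b in terms of Ω.
  have hb : ∀ g h : G, (Ω (g+h) (g+h) : ℂ) * (Ω g g : ℂ)⁻¹ * (Ω h h : ℂ)⁻¹
      = Ω g h * Ω h g := by
    intro g h
    rw [hkey g h]
    field_simp
  -- Conclusions.
  refine ⟨?_, ?_, ?_⟩
  · intro g
    show Ω (-g) (-g) = Ω g g
    refine Units.ext ?_
    have h1 := hBadd g (-g) g
    rw [add_neg_cancel] at h1
    rw [hΩl g, hΩr g] at h1
    have h2 := hkey g (-g)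
    rw [add_neg_cancel] at h2
    rw [hΩl 0] at h2
    have n1 : (Ω g g : ℂ) ≠ 0 := Units.ne_zero _
    have n2 : (Ω (-g) g : ℂ) ≠ 0 := Units.ne_zero _
    have n3 : (Ω g (-g) : ℂ) ≠ 0 := Units.ne_zero _
    exact mul_left_cancel₀ (mul_ne_zero (mul_ne_zero n3 n2) n1)
      (show (Ω g (-g) : ℂ) * Ω (-g) g * Ω g g * Ω (-g) (-g)
          = Ω g (-g) * Ω (-g) g * Ω g g * Ω g g by
        linear_combination h1 - h2)
  · intro g₁ g₂ h
    show Ω (g₁ + g₂ + h) (g₁ + g₂ + h) * (Ω (g₁+g₂) (g₁+g₂))⁻¹ * (Ω h h)⁻¹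
        = Ω (g₁ + h) (g₁ + h) * (Ω g₁ g₁)⁻¹ * (Ω h h)⁻¹ *
          (Ω (g₂ + h) (g₂ + h) * (Ω g₂ g₂)⁻¹ * (Ω h h)⁻¹)
    refine Units.ext ?_
    push_cast
    rw [hb (g₁+g₂) h, hb g₁ h, hb g₂ h]
    linear_combination hBadd g₁ g₂ h
  · intro g h₁ h₂
    show Ω (g + (h₁ + h₂)) (g + (h₁ + h₂)) * (Ω g g)⁻¹ * (Ω (h₁+h₂) (h₁+h₂))⁻¹
        = Ω (g + h₁) (g + h₁) * (Ω g g)⁻¹ * (Ω h₁ h₁)⁻¹ *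
          (Ω (g + h₂) (g + h₂) * (Ω g g)⁻¹ * (Ω h₂ h₂)⁻¹)
    refine Units.ext ?_
    push_cast
    rw [hb g (h₁+h₂), hb g h₁, hb g h₂]
    linear_combination hBadd h₁ h₂ g
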